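/- arXiv:2008.10467 — 2 statements merged into one kernel-verified Lean document; each statement's English description precedes it below -/
import Mathlib

section
/- Let N ≥ 1 and let e, G : Fin N → ℝ be vectors with G i < 0 for every i. Let 0 < γ₂ ≤ γ₁ and let h : ℝ → ℝ satisfy the slope bounds −γ₁ ≤ (h x − h y)/(x − y) ≤ −γ₂ for all x ≠ y. Let a, â ∈ ℝ with e (last index) = a − â, and suppose either e i ≤ 0 for all i or e i ≥ 0 for all i. Then −(∑ i, e i * G i) * (h a − h â) ≤ (∑ i, e i * G i) * γ₂ * (a − â). -/
/-- Cathode part of the paper's Lemma 1: for a gain vector `G` with all negative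
entries, an error vector `e` whose components have a uniform sign, and a strictly
monotonically decreasing nonlinearity `h` with difference quotients between `-γ₁`
and `-γ₂`, one has `-(eᵀG) * (h a - h ahat) ≤ (eᵀG) * γ₂ * (a - ahat)`. -/
theorem stmt_0 (N : ℕ) (hN : 1 ≤ N) (e G : Fin N → ℝ)
    (hG : ∀ i, G i < 0)
    (γ₁ γ₂ : ℝ) (hγ₂ : 0 < γ₂) (hγ : γ₂ ≤ γ₁)
    (h : ℝ → ℝ)
    (hslope : ∀ x y : ℝ, x ≠ y →
      -γ₁ ≤ (h x - h y) / (x - y) ∧ (h x - h y) / (x - y) ≤ -γ₂)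
    (a ahat : ℝ)
    (hlast : e ⟨N - 1, Nat.sub_lt (by omega) one_pos⟩ = a - ahat)
    (hsign : (∀ i, e i ≤ 0) ∨ (∀ i, 0 ≤ e i)) :
    -(∑ i, e i * G i) * (h a - h ahat) ≤ (∑ i, e i * G i) * γ₂ * (a - ahat) := by
  set S := ∑ i, e i * G i with hS
  have hkey : S * (a - ahat) ≤ 0 := by
    rcases hsign with hs | hs
    · have hSnn : 0 ≤ S := Finset.sum_nonneg fun i _ =>
        by nlinarith [hs i, (hG i).le]
      have : a - ahat ≤ 0 := hlast ▸ hs _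
      exact mul_nonpos_of_nonneg_of_nonpos hSnn this
    · have hSnp : S ≤ 0 := Finset.sum_nonpos fun i _ =>
        mul_nonpos_of_nonneg_of_nonpos (hs i) (hG i).le
      have : 0 ≤ a - ahat := hlast ▸ hs _
      exact mul_nonpos_of_nonpos_of_nonneg hSnp this
  rcases eq_or_ne a ahat with rfl | hne
  · simp
  · obtain ⟨h1, h2⟩ := hslope a ahat hne
    have hd : a - ahat ≠ 0 := sub_ne_zero.mpr hne
    have hq : h a - h ahat = ((h a - h ahat) / (a - ahat)) * (a - ahat) :=
      (div_mul_cancel₀ _ hd).symm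
    rw [hq]
    nlinarith [hkey, h2]
end

section
/- Let A, F, M, ρ, a, Lₙ, Lₛ, Lₚ, Rₙ, κₙ, κₛ, κₚ, κ_sei, εₙ, ε_f be strictly positive real numbers, let L₀, Q₀ ∈ ℝ, and let t ≥ 0. Let L_sei, Q, R_sei, R_pf : ℝ → ℝ with L_sei 0 = L₀, Q 0 = Q₀, and R_pf 0 = 0, and define R_e : ℝ → ℝ by R_e s = (1/(2A)) * ( Lₙ / (κₙ * (1 − εₙ * (1 + 3 * L_sei s / Rₙ) − ε_f)^(3/2)) + 2 Lₛ / κₛ + Lₚ / κₚ ). Suppose there are functions l, r : ℝ → ℝ such that for every s ∈ [0, t]: L_sei has derivative l s at s, Q has derivative −(l s) * 2 F ρ a A Lₙ / (3600 M) at s, R_sei has derivative (l s)/(a A Lₙ κ_sei) at s, R_e has derivative r s at s, and R_pf has derivative (l s)/(a A Lₙ κ_sei) + r s at s. Then R_pf t = (1/(2A)) * ( Lₙ / (κₙ * (1 − εₙ * (1 + (3/Rₙ) * (L₀ − 3600 * (Q t − Q₀) * M / (2 F A Lₙ a ρ))) − ε_f)^(3/2)) + 2 Lₛ / κₛ + Lₚ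 / κₚ ) − R_e 0 − 3600 * (Q t − Q₀) * M / (2 F ρ A² a² Lₙ² κ_sei). -/
/-- A function with zero derivative on `[0, t]` takes the same value at `t` as at `0`. -/
lemma const_of_deriv_zero_aux {f : ℝ → ℝ} {t : ℝ} (ht : 0 ≤ t)
    (h : ∀ s ∈ Set.Icc (0 : ℝ) t, HasDerivAt f 0 s) : f t = f 0 := by
  apply constant_of_has_deriv_right_zero (f := f) (a := 0) (b := t)
  · intro x hx
    exact ((h x hx).continuousAt).continuousWithinAt
  · intro x hx
    exact ((h x (Set.mem_Icc_of_Ico hx)).hasDerivWithinAt)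
  · exact Set.right_mem_Icc.mpr ht

/-- The paper's derived power-fade/capacity-fade relationship (equation (14)):
the power-fade resistance at time `t` is expressed purely in terms of the
capacity loss `Q t - Q₀`. -/
theorem stmt_13 (A F M ρ a Lₙ Lₛ Lₚ Rₙ κₙ κₛ κₚ κ_sei εₙ ε_f : ℝ)
    (hA : 0 < A) (hF : 0 < F) (hM : 0 < M) (hρ : 0 < ρ) (ha : 0 < a)
    (hLₙ : 0 < Lₙ) (hLₛ : 0 < Lₛ) (hLₚ : 0 < Lₚ) (hRₙ : 0 < Rₙ)
    (hκₙ : 0 < κₙ) (hκₛ : 0 < κₛ) (hκₚ : 0 < κₚ) (hκ_sei : 0 < κ_sei)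
    (hεₙ : 0 < εₙ) (hε_f : 0 < ε_f)
    (L₀ Q₀ t : ℝ) (ht : 0 ≤ t)
    (L_sei Q R_sei R_pf : ℝ → ℝ)
    (hL0 : L_sei 0 = L₀) (hQ0 : Q 0 = Q₀) (hRpf0 : R_pf 0 = 0)
    (R_e : ℝ → ℝ)
    (hRe : ∀ s : ℝ, R_e s = (1 / (2 * A)) *
      (Lₙ / (κₙ * (1 - εₙ * (1 + 3 * L_sei s / Rₙ) - ε_f) ^ ((3 : ℝ) / 2))
        + 2 * Lₛ / κₛ + Lₚ / κₚ))
    (l r : ℝ → ℝ)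
    (hL : ∀ s ∈ Set.Icc (0 : ℝ) t, HasDerivAt L_sei (l s) s)
    (hQ : ∀ s ∈ Set.Icc (0 : ℝ) t,
      HasDerivAt Q (-(l s) * 2 * F * ρ * a * A * Lₙ / (3600 * M)) s)
    (hRsei : ∀ s ∈ Set.Icc (0 : ℝ) t,
      HasDerivAt R_sei (l s / (a * A * Lₙ * κ_sei)) s)
    (hReDeriv : ∀ s ∈ Set.Icc (0 : ℝ) t, HasDerivAt R_e (r s) s)
    (hRpf : ∀ s ∈ Set.Icc (0 : ℝ) t,
      HasDerivAt R_pf (l s / (a * A * Lₙ * κ_sei) + r s) s) :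
    R_pf t = (1 / (2 * A)) *
      (Lₙ / (κₙ * (1 - εₙ * (1 + (3 / Rₙ) *
          (L₀ - 3600 * (Q t - Q₀) * M / (2 * F * A * Lₙ * a * ρ))) - ε_f)
          ^ ((3 : ℝ) / 2))
        + 2 * Lₛ / κₛ + Lₚ / κₚ)
      - R_e 0
      - 3600 * (Q t - Q₀) * M / (2 * F * ρ * A ^ 2 * a ^ 2 * Lₙ ^ 2 * κ_sei) := by
  have hA' := hA.ne'
  have hF' := hF.ne'
  have hM' := hM.ne'
  have hρ' := hρ.ne'
  have ha' := ha.ne'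
  have hLₙ' := hLₙ.ne'
  have hκ' := hκ_sei.ne'
  -- Step 1: Q s + L_sei s * c is constant, giving L_sei t in terms of Q t.
  set c : ℝ := 2 * F * ρ * a * A * Lₙ / (3600 * M) with hc
  have h1 : (fun s => Q s + L_sei s * c) t = (fun s => Q s + L_sei s * c) 0 := by
    apply const_of_deriv_zero_aux ht
    intro s hs
    have := (hQ s hs).add ((hL s hs).mul_const c)
    convert this using 1
    · rfl
    · rfl
    · rfl
    rw [hc]; field_simp; ring
  have hLt : L_sei t = L₀ - 3600 * (Q t - Q₀) * M / (2 * F * A * Lₙ * a * ρ) := by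
    simp only [hL0, hQ0] at h1
    have hc0 : c ≠ 0 := by
      rw [hc]; positivity
    rw [hc] at h1
    field_simp [hc] at h1 ⊢
    nlinarith [h1]
  -- Step 2: R_pf s - R_e s + Q s * k is constant.
  set k : ℝ := 3600 * M / (2 * F * ρ * A ^ 2 * a ^ 2 * Lₙ ^ 2 * κ_sei) with hk
  have h2 : (fun s => R_pf s - R_e s + Q s * k) t
      = (fun s => R_pf s - R_e s + Q s * k) 0 := by
    apply const_of_deriv_zero_aux ht
    intro s hs
    have := ((hRpf s hs).sub (hReDeriv s hs)).add ((hQ s hs).mul_const k)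
    convert this using 1
    · rfl
    · rfl
    · rfl
    rw [hk]; field_simp; ring
  simp only [hRpf0, hQ0] at h2
  have hmain : R_pf t = R_e t - R_e 0 - (Q t - Q₀) * k := by linarith [h2]
  rw [hmain, hRe t, hLt, hk]
  have harg : 3 * (L₀ - 3600 * (Q t - Q₀) * M / (2 * F * A * Lₙ * a * ρ)) / Rₙ
      = (3 / Rₙ) * (L₀ - 3600 * (Q t - Q₀) * M / (2 * F * A * Lₙ * a * ρ)) := by
    ring
  rw [harg]
  ring
end
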